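/- Consistency of the plug-in variance estimator for the Van Valen MCV (Lemma 1, variant VV): Under the stated assumptions with Σ ≠ 0, the plug-in estimator σ̂²_n = (1/4)·(Ĉ^VV_n)⁻²·A_VV(μ̂_n, Σ̂_n)·Σ̂_{X̃,n}·A_VV(μ̂_n, Σ̂_n)ᵀ converges in probability, as n → ∞, to σ²_{C^VV} = (1/4)·(C^VV)⁻²·A_VV(μ, Σ)·Σ_X̃·A_VV(μ, Σ)ᵀ. -/

import Mathlib

open MeasureTheory ProbabilityTheory Filter Matrix Topology BigOperators

noncomputable section

/-- Sample mean `μ̂_n` of the first `n` observations. -/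
def empMean {Ω : Type} {d : ℕ} (X : ℕ → Ω → Fin d → ℝ) (n : ℕ) (ω : Ω) : Fin d → ℝ :=
  fun a => (n : ℝ)⁻¹ * ∑ j ∈ Finset.range n, X j ω a

/-- Sample covariance matrix `Σ̂_n` of the first `n` observations. -/
def empCov {Ω : Type} {d : ℕ} (X : ℕ → Ω → Fin d → ℝ) (n : ℕ) (ω : Ω) :
    Matrix (Fin d) (Fin d) ℝ :=
  fun a b => (n : ℝ)⁻¹ * ∑ j ∈ Finset.range n,
    (X j ω a - empMean X n ω a) * (X j ω b - empMean X n ω b)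

/-- Empirical third-moment matrix `Ψ̂₃,n`. -/
def empPsi3 {Ω : Type} {d : ℕ} (X : ℕ → Ω → Fin d → ℝ) (n : ℕ) (ω : Ω) :
    Matrix (Fin d × Fin d) (Fin d) ℝ :=
  fun p s => ((n : ℝ)⁻¹ * ∑ j ∈ Finset.range n, X j ω p.1 * X j ω p.2 * X j ω s)
    - ((n : ℝ)⁻¹ * ∑ j ∈ Finset.range n, X j ω p.1 * X j ω p.2)
      * ((n : ℝ)⁻¹ * ∑ j ∈ Finset.range n, X j ω s)

/-- Empirical fourth-moment matrix `Ψ̂₄,n`. -/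
def empPsi4 {Ω : Type} {d : ℕ} (X : ℕ → Ω → Fin d → ℝ) (n : ℕ) (ω : Ω) :
    Matrix (Fin d × Fin d) (Fin d × Fin d) ℝ :=
  fun p q => ((n : ℝ)⁻¹ * ∑ j ∈ Finset.range n, X j ω p.1 * X j ω p.2 * X j ω q.1 * X j ω q.2)
    - ((n : ℝ)⁻¹ * ∑ j ∈ Finset.range n, X j ω p.1 * X j ω p.2)
      * ((n : ℝ)⁻¹ * ∑ j ∈ Finset.range n, X j ω q.1 * X j ω q.2)

/-- The matrix `D̃(x) ∈ ℝ^{d²×d}`; the row index `(a, r)` plays the role of the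
linear index `(a−1)d + r`. -/
def Dtilde {d : ℕ} (x : Fin d → ℝ) : Matrix (Fin d × Fin d) (Fin d) ℝ :=
  fun p s =>
    (if s = p.1 ∧ p.1 ≠ p.2 then -(x p.2) else 0)
      + (if s = p.2 ∧ p.2 = p.1 then -(2 * x s) else 0)
      + (if p.2 = s ∧ s ≠ p.1 then -(x p.1) else 0)

/-- The vectorization `vec(I_d)` of the identity matrix. -/
def vecId (d : ℕ) : Fin d × Fin d → ℝ := fun p => if p.2 = p.1 then 1 else 0

/-- The row vector `A_VV(m, S) ∈ ℝ^{1×(d+d²)}`. -/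
def Avv {d : ℕ} (m : Fin d → ℝ) (S : Matrix (Fin d) (Fin d) ℝ) :
    (Fin d ⊕ Fin d × Fin d) → ℝ :=
  Sum.elim
    (fun s => -2 * S.trace * m s / (m ⬝ᵥ m) ^ 2
      + (m ⬝ᵥ m)⁻¹ * Matrix.vecMul (vecId d) (Dtilde m) s)
    (fun p => (m ⬝ᵥ m)⁻¹ * vecId d p)

/-- The Van Valen multivariate coefficient of variation `C^VV = sqrt(tr S/(mᵀm))`. -/
def CVVof {d : ℕ} (m : Fin d → ℝ) (S : Matrix (Fin d) (Fin d) ℝ) : ℝ :=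
  Real.sqrt (S.trace / (m ⬝ᵥ m))

/-- The variance functional `σ²_{C^VV}(m, S, Ψ₃, Ψ₄)
  = (1/4)(C^VV)⁻² A_VV(m,S) Σ_X̃ A_VV(m,S)ᵀ`;  applied to the population (resp.
empirical) quantities it gives the asymptotic variance (resp. plug-in estimator). -/
def sigma2VV {d : ℕ} (m : Fin d → ℝ) (S : Matrix (Fin d) (Fin d) ℝ)
    (Ψ3 : Matrix (Fin d × Fin d) (Fin d) ℝ)
    (Ψ4 : Matrix (Fin d × Fin d) (Fin d × Fin d) ℝ) : ℝ :=
  (1 / 4) * ((CVVof m S) ^ 2)⁻¹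
    * (Avv m S ⬝ᵥ (Matrix.fromBlocks S Ψ3ᵀ Ψ3 Ψ4).mulVec (Avv m S))


/-! ### Auxiliary lemmas -/

instance matMeasurableSpace {α β : Type*} : MeasurableSpace (Matrix α β ℝ) :=
  (inferInstance : MeasurableSpace (α → β → ℝ))

lemma measurable_matrix_apply' {α β : Type*} (a : α) (b : β) :
    Measurable fun M : Matrix α β ℝ => M a b :=
  (measurable_pi_apply b).comp (measurable_pi_apply a)

abbrev Quad (d : ℕ) := (Fin d → ℝ) × Matrix (Fin d) (Fin d) ℝ
  × Matrix (Fin d × Fin d) (Fin d) ℝ × Matrix (Fin d × Fin d) (Fin d × Fin d) ℝ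

lemma measurable_sigma2VV (d : ℕ) :
    Measurable (fun q : Quad d => sigma2VV q.1 q.2.1 q.2.2.1 q.2.2.2) := by
  have hm : ∀ s, Measurable fun q : Quad d => q.1 s := fun s =>
    (measurable_pi_apply s).comp measurable_fst
  have hS : ∀ a b, Measurable fun q : Quad d => q.2.1 a b := fun a b =>
    (measurable_matrix_apply' a b).comp (measurable_fst.comp measurable_snd)
  have h3 : ∀ p s, Measurable fun q : Quad d => q.2.2.1 p s := fun p s =>
    (measurable_matrix_apply' p s).comp (measurable_fst.comp (measurable_snd.comp measurable_snd))
  have h4 : ∀ p r, Measurable fun q : Quad d => q.2.2.2 p r := fun p r =>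
    (measurable_matrix_apply' p r).comp (measurable_snd.comp (measurable_snd.comp measurable_snd))
  have hdot : Measurable fun q : Quad d => q.1 ⬝ᵥ q.1 := by
    simp only [dotProduct]
    exact Finset.measurable_sum _ fun s _ => (hm s).mul (hm s)
  have htr : Measurable fun q : Quad d => q.2.1.trace := by
    simp only [Matrix.trace, Matrix.diag]
    exact Finset.measurable_sum _ fun a _ => hS a a
  have hD : ∀ p s, Measurable fun q : Quad d => Dtilde q.1 p s := by
    intro p s
    unfold Dtilde
    refine Measurable.add (Measurable.add ?_ ?_) ?_
    · split_ifs
      exacts [(hm p.2).neg, measurable_const]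
    · split_ifs
      exacts [(measurable_const.mul (hm s)).neg, measurable_const]
    · split_ifs
      exacts [(hm p.1).neg, measurable_const]
  have hA : ∀ i, Measurable fun q : Quad d => Avv q.1 q.2.1 i := by
    rintro (s | p)
    · simp only [Avv, Sum.elim_inl]
      refine Measurable.add ?_ ?_
      · exact ((measurable_const.mul htr).mul (hm s)).div (hdot.pow_const 2)
      · refine hdot.inv.mul ?_
        simp only [Matrix.vecMul, dotProduct]
        exact Finset.measurable_sum _ fun p _ => measurable_const.mul (hD p s)
    · simp only [Avv, Sum.elim_inr]
      exact hdot.inv.mul measurable_const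
  have hB : ∀ i j, Measurable fun q : Quad d =>
      (Matrix.fromBlocks q.2.1 q.2.2.1ᵀ q.2.2.1 q.2.2.2) i j := by
    rintro (a | p) (b | r)
    · simpa [Matrix.fromBlocks] using hS a b
    · simpa [Matrix.fromBlocks] using h3 r a
    · simpa [Matrix.fromBlocks] using h3 p b
    · simpa [Matrix.fromBlocks] using h4 p r
  unfold sigma2VV CVVof
  refine Measurable.mul (Measurable.mul measurable_const ?_) ?_
  · exact ((Real.continuous_sqrt.measurable.comp (htr.div hdot)).pow_const 2).inv
  · simp only [dotProduct, Matrix.mulVec]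
    exact Finset.measurable_sum _ fun i _ =>
      (hA i).mul (Finset.measurable_sum _ fun j _ => (hB i j).mul (hA j))

lemma continuousAt_sigma2VV {d : ℕ} (pt : Quad d) (hmm : pt.1 ⬝ᵥ pt.1 ≠ 0)
    (htr : 0 < pt.2.1.trace / (pt.1 ⬝ᵥ pt.1)) :
    ContinuousAt (fun q : Quad d => sigma2VV q.1 q.2.1 q.2.2.1 q.2.2.2) pt := by
  have hmc : ∀ s, Continuous fun q : Quad d => q.1 s := fun s =>
    (continuous_apply s).comp continuous_fst
  have hSc : ∀ a b, Continuous fun q : Quad d => q.2.1 a b := fun a b =>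
    (continuous_fst.comp continuous_snd).matrix_elem a b
  have h3c : ∀ p s, Continuous fun q : Quad d => q.2.2.1 p s := fun p s =>
    (continuous_fst.comp (continuous_snd.comp continuous_snd)).matrix_elem p s
  have h4c : ∀ p r, Continuous fun q : Quad d => q.2.2.2 p r := fun p r =>
    (continuous_snd.comp (continuous_snd.comp continuous_snd)).matrix_elem p r
  have hdotc : Continuous fun q : Quad d => q.1 ⬝ᵥ q.1 := by
    simp only [dotProduct]
    exact continuous_finset_sum _ fun s _ => (hmc s).mul (hmc s)
  have htrc : Continuous fun q : Quad d => q.2.1.trace := by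
    simp only [Matrix.trace, Matrix.diag]
    exact continuous_finset_sum _ fun a _ => hSc a a
  have hDc : ∀ p s, Continuous fun q : Quad d => Dtilde q.1 p s := by
    intro p s
    unfold Dtilde
    refine Continuous.add (Continuous.add ?_ ?_) ?_
    · split_ifs
      exacts [(hmc p.2).neg, continuous_const]
    · split_ifs
      exacts [(continuous_const.mul (hmc s)).neg, continuous_const]
    · split_ifs
      exacts [(hmc p.1).neg, continuous_const]
  have hAc : ∀ i, ContinuousAt (fun q : Quad d => Avv q.1 q.2.1 i) pt := by
    rintro (s | p)
    · simp only [Avv, Sum.elim_inl]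
      refine ContinuousAt.add ?_ ?_
      · exact ContinuousAt.div ((continuous_const.mul htrc).mul (hmc s)).continuousAt
          (hdotc.pow 2).continuousAt (pow_ne_zero 2 hmm)
      · refine (hdotc.continuousAt.inv₀ hmm).mul ?_
        simp only [Matrix.vecMul, dotProduct]
        exact (continuous_finset_sum _ fun p _ =>
          continuous_const.mul (hDc p s)).continuousAt
    · simp only [Avv, Sum.elim_inr]
      exact (hdotc.continuousAt.inv₀ hmm).mul continuousAt_const
  have hBc : ∀ i j, Continuous fun q : Quad d =>
      (Matrix.fromBlocks q.2.1 q.2.2.1ᵀ q.2.2.1 q.2.2.2) i j := by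
    rintro (a | p) (b | r)
    · simpa [Matrix.fromBlocks] using hSc a b
    · simpa [Matrix.fromBlocks] using h3c r a
    · simpa [Matrix.fromBlocks] using h3c p b
    · simpa [Matrix.fromBlocks] using h4c p r
  unfold sigma2VV CVVof
  refine ContinuousAt.mul (ContinuousAt.mul continuousAt_const ?_) ?_
  · refine ContinuousAt.inv₀ ?_ ?_
    · exact ((Real.continuous_sqrt.continuousAt.comp
        (htrc.continuousAt.div hdotc.continuousAt hmm)).pow 2)
    · rw [Real.sq_sqrt htr.le]
      exact ne_of_gt htr
  · simp only [dotProduct, Matrix.mulVec]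
    exact tendsto_finset_sum _ fun i _ =>
      (hAc i).mul (tendsto_finset_sum _ fun j _ => (hBc i j).continuousAt.mul (hAc j))

lemma pow_le_one_add_pow_four (t : ℝ) (ht : 0 ≤ t) {k : ℕ} (hk : k ≤ 4) : t ^ k ≤ 1 + t ^ 4 := by
  rcases le_total t 1 with h | h
  · exact (pow_le_one₀ ht h).trans (le_add_of_nonneg_right (by positivity))
  · exact (pow_le_pow_right₀ h hk).trans (le_add_of_nonneg_left zero_le_one)

lemma abs_coord_le {d : ℕ} (x : Fin d → ℝ) (a : Fin d) : |x a| ≤ ‖x‖ := by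
  simpa using norm_le_pi_norm x a

lemma abs_coord2_le {d : ℕ} (x : Fin d → ℝ) (a b : Fin d) : |x a * x b| ≤ ‖x‖ ^ 2 := by
  rw [abs_mul, sq]
  exact mul_le_mul (abs_coord_le x a) (abs_coord_le x b) (abs_nonneg _) (norm_nonneg _)

lemma abs_coord3_le {d : ℕ} (x : Fin d → ℝ) (a b c : Fin d) :
    |x a * x b * x c| ≤ ‖x‖ ^ 3 := by
  rw [abs_mul, show (3 : ℕ) = 2 + 1 from rfl, pow_succ]
  exact mul_le_mul (abs_coord2_le x a b) (abs_coord_le x c) (abs_nonneg _) (by positivity)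

lemma abs_coord4_le {d : ℕ} (x : Fin d → ℝ) (a b c e : Fin d) :
    |x a * x b * x c * x e| ≤ ‖x‖ ^ 4 := by
  rw [abs_mul, show (4 : ℕ) = 3 + 1 from rfl, pow_succ]
  exact mul_le_mul (abs_coord3_le x a b c) (abs_coord_le x e) (abs_nonneg _) (by positivity)

lemma integrable_poly {Ω : Type} [MeasurableSpace Ω] {P : Measure Ω} [IsProbabilityMeasure P]
    {d : ℕ} {Y : Ω → Fin d → ℝ} (hY : Measurable Y)
    (hmom : Integrable (fun ω => ‖Y ω‖ ^ 4) P)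
    {g : (Fin d → ℝ) → ℝ} (hg : Measurable g) (C : ℝ)
    (hb : ∀ x, |g x| ≤ C * (1 + ‖x‖ ^ 4)) : Integrable (fun ω => g (Y ω)) P := by
  have hint : Integrable (fun ω => C * (1 + ‖Y ω‖ ^ 4)) P :=
    (((integrable_const (1 : ℝ)).add hmom)).const_mul C
  exact hint.mono' (hg.comp hY).aestronglyMeasurable (Filter.Eventually.of_forall fun ω => hb _)

section Moments
variable {Ω : Type} [MeasurableSpace Ω] {P : Measure Ω} [IsProbabilityMeasure P]
  {d : ℕ} {Y : Ω → Fin d → ℝ} (hY : Measurable Y) (hmom : Integrable (fun ω => ‖Y ω‖ ^ 4) P)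

include hY hmom

lemma integrable_coord1 (a : Fin d) : Integrable (fun ω => Y ω a) P := by
  refine integrable_poly hY hmom (measurable_pi_apply a) 1 fun x => ?_
  rw [one_mul]
  exact (abs_coord_le x a).trans ((pow_one ‖x‖).symm.le.trans
    (pow_le_one_add_pow_four _ (norm_nonneg _) (by norm_num)))

lemma integrable_coord2 (a b : Fin d) : Integrable (fun ω => Y ω a * Y ω b) P := by
  refine integrable_poly hY hmom ((measurable_pi_apply a).mul (measurable_pi_apply b)) 1
    fun x => ?_
  rw [one_mul]
  exact (abs_coord2_le x a b).trans (pow_le_one_add_pow_four _ (norm_nonneg _) (by norm_num))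

lemma integrable_coord3 (a b c : Fin d) : Integrable (fun ω => Y ω a * Y ω b * Y ω c) P := by
  refine integrable_poly hY hmom
    (((measurable_pi_apply a).mul (measurable_pi_apply b)).mul (measurable_pi_apply c)) 1
    fun x => ?_
  rw [one_mul]
  exact (abs_coord3_le x a b c).trans (pow_le_one_add_pow_four _ (norm_nonneg _) (by norm_num))

lemma integrable_coord4 (a b c e : Fin d) :
    Integrable (fun ω => Y ω a * Y ω b * Y ω c * Y ω e) P := by
  refine integrable_poly hY hmom
    ((((measurable_pi_apply a).mul (measurable_pi_apply b)).mul
      (measurable_pi_apply c)).mul (measurable_pi_apply e)) 1 fun x => ?_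
  rw [one_mul]
  exact (abs_coord4_le x a b c e).trans (pow_le_one_add_pow_four _ (norm_nonneg _) (by norm_num))

lemma diag_eq_var (μ : Fin d → ℝ) (hμdef : ∀ a, μ a = ∫ ω, Y ω a ∂P)
    (SigM : Matrix (Fin d) (Fin d) ℝ)
    (hSig : ∀ a b, SigM a b = (∫ ω, Y ω a * Y ω b ∂P) - μ a * μ b) (a : Fin d) :
    SigM a a = ∫ ω, (Y ω a - μ a) ^ 2 ∂P := by
  have h2 := integrable_coord2 hY hmom a a
  have h1 := integrable_coord1 hY hmom a
  have hexp : (fun ω => (Y ω a - μ a) ^ 2)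
      = fun ω => Y ω a * Y ω a - (2 * μ a) * Y ω a + μ a * μ a := by
    funext ω; ring
  have hc : Integrable (fun ω => 2 * μ a * Y ω a) P := h1.const_mul _
  have hsub : Integrable (fun ω => Y ω a * Y ω a - 2 * μ a * Y ω a) P := h2.sub hc
  rw [hexp, integral_add hsub (integrable_const _), integral_sub h2 hc,
    integral_const_mul, ← hμdef a, integral_const, probReal_univ,
    one_smul, hSig a a]
  ring

lemma trace_pos (μ : Fin d → ℝ) (hμdef : ∀ a, μ a = ∫ ω, Y ω a ∂P)
    (SigM : Matrix (Fin d) (Fin d) ℝ)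
    (hSig : ∀ a b, SigM a b = (∫ ω, Y ω a * Y ω b ∂P) - μ a * μ b)
    (hSig0 : SigM ≠ 0) : 0 < SigM.trace := by
  have hdiag : ∀ a, SigM a a = ∫ ω, (Y ω a - μ a) ^ 2 ∂P :=
    diag_eq_var hY hmom μ hμdef SigM hSig
  have hnn : ∀ a, 0 ≤ SigM a a := fun a => by
    rw [hdiag a]; exact integral_nonneg fun ω => sq_nonneg _
  have htrnn : 0 ≤ SigM.trace := Finset.sum_nonneg fun a _ => hnn a
  rcases htrnn.lt_or_eq with h | h
  · exact h
  exfalso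
  have hzero : ∀ a, SigM a a = 0 := by
    intro a
    have := (Finset.sum_eq_zero_iff_of_nonneg (fun a _ => hnn a)).mp h.symm
    exact this a (Finset.mem_univ a)
  have hae : ∀ a, ∀ᵐ ω ∂P, Y ω a = μ a := by
    intro a
    have hint : Integrable (fun ω => (Y ω a - μ a) ^ 2) P := by
      have heq : (fun ω => (Y ω a - μ a) ^ 2)
          = fun ω => Y ω a * Y ω a - 2 * μ a * Y ω a + μ a * μ a := by funext ω; ring
      rw [heq]
      have hc : Integrable (fun ω => 2 * μ a * Y ω a) P :=
        (integrable_coord1 hY hmom a).const_mul _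
      have hsub : Integrable (fun ω => Y ω a * Y ω a - 2 * μ a * Y ω a) P :=
        (integrable_coord2 hY hmom a a).sub hc
      exact hsub.add (integrable_const _)
    have h0 : ∫ ω, (Y ω a - μ a) ^ 2 ∂P = 0 := by rw [← hdiag a, hzero a]
    have := (integral_eq_zero_iff_of_nonneg (fun ω => sq_nonneg _) hint).mp h0
    filter_upwards [this] with ω hω
    have h2 : (Y ω a - μ a) ^ 2 = 0 := hω
    nlinarith [sq_nonneg (Y ω a - μ a)]
  apply hSig0
  funext a b
  have h1 : ∫ ω, Y ω a * Y ω b ∂P = ∫ ω, μ a * Y ω b ∂P := by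
    apply integral_congr_ae
    filter_upwards [hae a] with ω hω
    rw [hω]
  have h2 : ∫ ω, μ a * Y ω b ∂P = μ a * μ b := by
    rw [integral_const_mul, ← hμdef b]
  simp [hSig a b, h1, h2]
end Moments

lemma slln_comp {Ω : Type} [MeasurableSpace Ω] {P : Measure Ω} [IsProbabilityMeasure P]
    {d : ℕ} (X : ℕ → Ω → Fin d → ℝ)
    (hindep : iIndepFun X P)
    (hident : ∀ n, IdentDistrib (X n) (X 0) P P)
    (g : (Fin d → ℝ) → ℝ) (hg : Measurable g)
    (hint : Integrable (fun ω => g (X 0 ω)) P) :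
    ∀ᵐ ω ∂P, Tendsto (fun n : ℕ => (n : ℝ)⁻¹ * ∑ j ∈ Finset.range n, g (X j ω)) atTop
      (𝓝 (∫ ω, g (X 0 ω) ∂P)) := by
  have h := strong_law_ae_real (fun j ω => g (X j ω)) hint
    (fun i j hij => (hindep.indepFun hij).comp hg hg)
    (fun i => (hident i).comp hg)
  filter_upwards [h] with ω hω
  simpa [div_eq_inv_mul] using hω

lemma empCov_eq {Ω : Type} {d : ℕ} (X : ℕ → Ω → Fin d → ℝ) {n : ℕ} (hn : 1 ≤ n) (ω : Ω)
    (a b : Fin d) :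
    empCov X n ω a b = ((n : ℝ)⁻¹ * ∑ j ∈ Finset.range n, X j ω a * X j ω b)
      - empMean X n ω a * empMean X n ω b := by
  have hn' : (n : ℝ) ≠ 0 := Nat.cast_ne_zero.mpr (by omega)
  set p := empMean X n ω a with hp
  set q := empMean X n ω b with hq
  have hsa : ∑ j ∈ Finset.range n, X j ω a = (n : ℝ) * p := by
    rw [hp]; simp only [empMean]; rw [← mul_assoc, mul_inv_cancel₀ hn', one_mul]
  have hsb : ∑ j ∈ Finset.range n, X j ω b = (n : ℝ) * q := by
    rw [hq]; simp only [empMean]; rw [← mul_assoc, mul_inv_cancel₀ hn', one_mul]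
  have key : ∑ j ∈ Finset.range n, (X j ω a - p) * (X j ω b - q)
      = (∑ j ∈ Finset.range n, X j ω a * X j ω b) - (n : ℝ) * (p * q) := by
    have heach : ∀ j, (X j ω a - p) * (X j ω b - q)
        = X j ω a * X j ω b - q * X j ω a - p * X j ω b + p * q := by intro j; ring
    simp only [heach, Finset.sum_add_distrib, Finset.sum_sub_distrib, ← Finset.mul_sum,
      Finset.sum_const, Finset.card_range, nsmul_eq_mul, hsa, hsb]
    ring
  rw [show empCov X n ω a b
      = (n : ℝ)⁻¹ * ∑ j ∈ Finset.range n, (X j ω a - p) * (X j ω b - q) from rfl,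
    key, mul_sub, ← mul_assoc, inv_mul_cancel₀ hn', one_mul]

set_option maxHeartbeats 1000000 in
attribute [local irreducible] sigma2VV in
/-- Consistency of the plug-in variance estimator for the Van
Valen MCV: the plug-in estimator `σ̂²_n` converges in probability to `σ²_{C^VV}`. -/
theorem sigma2VV_plugin_consistent
    (d : ℕ) (hd : 1 ≤ d)
    {Ω : Type} [MeasurableSpace Ω] (P : Measure Ω) [IsProbabilityMeasure P]
    (X : ℕ → Ω → Fin d → ℝ) (hmeas : ∀ n, Measurable (X n))
    (hindep : iIndepFun X P)
    (hident : ∀ n, IdentDistrib (X n) (X 0) P P)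
    (hmom : Integrable (fun ω => ‖X 0 ω‖ ^ 4) P)
    (μ : Fin d → ℝ) (hμdef : ∀ a, μ a = ∫ ω, X 0 ω a ∂P) (hμ : μ ≠ 0)
    (SigM : Matrix (Fin d) (Fin d) ℝ)
    (hSig : ∀ a b, SigM a b = (∫ ω, X 0 ω a * X 0 ω b ∂P) - μ a * μ b)
    (hSig0 : SigM ≠ 0)
    (Ψ3 : Matrix (Fin d × Fin d) (Fin d) ℝ)
    (hΨ3 : ∀ a r s, Ψ3 (a, r) s
      = (∫ ω, X 0 ω a * X 0 ω r * X 0 ω s ∂P)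
        - (∫ ω, X 0 ω a * X 0 ω r ∂P) * (∫ ω, X 0 ω s ∂P))
    (Ψ4 : Matrix (Fin d × Fin d) (Fin d × Fin d) ℝ)
    (hΨ4 : ∀ a r b s, Ψ4 (a, r) (b, s)
      = (∫ ω, X 0 ω a * X 0 ω r * X 0 ω b * X 0 ω s ∂P)
        - (∫ ω, X 0 ω a * X 0 ω r ∂P) * (∫ ω, X 0 ω b * X 0 ω s ∂P)) :
    ∀ ε : ℝ, 0 < ε →
      Tendsto
        (fun n : ℕ => P {ω |
          ε < |sigma2VV (empMean X n ω) (empCov X n ω) (empPsi3 X n ω) (empPsi4 X n ω)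
                - sigma2VV μ SigM Ψ3 Ψ4|})
        atTop (𝓝 0) := by
  intro ε hε
  have hY0 : Measurable (X 0) := hmeas 0
  set c := sigma2VV μ SigM Ψ3 Ψ4 with hc
  set f : ℕ → Ω → ℝ := fun n ω =>
    sigma2VV (empMean X n ω) (empCov X n ω) (empPsi3 X n ω) (empPsi4 X n ω) with hf
  -- strong laws for the empirical moments
  have t1 : ∀ᵐ ω ∂P, ∀ a : Fin d,
      Tendsto (fun n : ℕ => (n : ℝ)⁻¹ * ∑ j ∈ Finset.range n, X j ω a) atTop
        (𝓝 (∫ ω, X 0 ω a ∂P)) := by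
    rw [ae_all_iff]; intro a
    exact slln_comp X hindep hident (fun x => x a) (measurable_pi_apply a)
      (integrable_coord1 hY0 hmom a)
  have t2 : ∀ᵐ ω ∂P, ∀ a b : Fin d,
      Tendsto (fun n : ℕ => (n : ℝ)⁻¹ * ∑ j ∈ Finset.range n, X j ω a * X j ω b) atTop
        (𝓝 (∫ ω, X 0 ω a * X 0 ω b ∂P)) := by
    rw [ae_all_iff]; intro a; rw [ae_all_iff]; intro b
    exact slln_comp X hindep hident (fun x => x a * x b)
      ((measurable_pi_apply a).mul (measurable_pi_apply b)) (integrable_coord2 hY0 hmom a b)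
  have t3 : ∀ᵐ ω ∂P, ∀ a b e : Fin d,
      Tendsto (fun n : ℕ => (n : ℝ)⁻¹ * ∑ j ∈ Finset.range n, X j ω a * X j ω b * X j ω e)
        atTop (𝓝 (∫ ω, X 0 ω a * X 0 ω b * X 0 ω e ∂P)) := by
    rw [ae_all_iff]; intro a; rw [ae_all_iff]; intro b; rw [ae_all_iff]; intro e
    exact slln_comp X hindep hident (fun x => x a * x b * x e)
      (((measurable_pi_apply a).mul (measurable_pi_apply b)).mul (measurable_pi_apply e))
      (integrable_coord3 hY0 hmom a b e)
  have t4 : ∀ᵐ ω ∂P, ∀ a b e g : Fin d,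
      Tendsto (fun n : ℕ =>
          (n : ℝ)⁻¹ * ∑ j ∈ Finset.range n, X j ω a * X j ω b * X j ω e * X j ω g)
        atTop (𝓝 (∫ ω, X 0 ω a * X 0 ω b * X 0 ω e * X 0 ω g ∂P)) := by
    rw [ae_all_iff]; intro a; rw [ae_all_iff]; intro b; rw [ae_all_iff]; intro e
    rw [ae_all_iff]; intro g
    exact slln_comp X hindep hident (fun x => x a * x b * x e * x g)
      ((((measurable_pi_apply a).mul (measurable_pi_apply b)).mul
        (measurable_pi_apply e)).mul (measurable_pi_apply g))
      (integrable_coord4 hY0 hmom a b e g)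
  -- continuity data at the population point
  have hdotpos : 0 < μ ⬝ᵥ μ := by
    have hnn : 0 ≤ μ ⬝ᵥ μ := by
      simp only [dotProduct]
      exact Finset.sum_nonneg fun i _ => mul_self_nonneg _
    have hne : μ ⬝ᵥ μ ≠ 0 := fun h => hμ (dotProduct_self_eq_zero.mp h)
    exact hnn.lt_of_ne (Ne.symm hne)
  have htrpos : 0 < SigM.trace := trace_pos hY0 hmom μ hμdef SigM hSig hSig0
  have hcontAt : ContinuousAt (fun q : Quad d => sigma2VV q.1 q.2.1 q.2.2.1 q.2.2.2)
      ((μ, SigM, Ψ3, Ψ4) : Quad d) :=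
    continuousAt_sigma2VV _ (ne_of_gt hdotpos) (div_pos htrpos hdotpos)
  -- a.e. convergence of the plug-in estimator
  have hT : ∀ᵐ ω ∂P, Tendsto (fun n => f n ω) atTop (𝓝 c) := by
    filter_upwards [t1, t2, t3, t4] with ω h1 h2 h3 h4
    have hmean : Tendsto (fun n => empMean X n ω) atTop (𝓝 μ) := by
      refine tendsto_pi_nhds.mpr fun a => ?_
      have := h1 a
      rw [← hμdef a] at this
      exact this
    have hcov : Tendsto (fun n => empCov X n ω) atTop (𝓝 SigM) := by
      refine tendsto_pi_nhds.mpr fun a => tendsto_pi_nhds.mpr fun b => ?_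
      have hlim : Tendsto (fun n : ℕ =>
          ((n : ℝ)⁻¹ * ∑ j ∈ Finset.range n, X j ω a * X j ω b)
            - empMean X n ω a * empMean X n ω b) atTop (𝓝 (SigM a b)) := by
        rw [hSig a b]
        refine Tendsto.sub (h2 a b) ?_
        have ha := h1 a; rw [← hμdef a] at ha
        have hb := h1 b; rw [← hμdef b] at hb
        exact ha.mul hb
      refine hlim.congr' ?_
      filter_upwards [Filter.eventually_ge_atTop 1] with n hn
      exact (empCov_eq X hn ω a b).symm
    have hp3 : Tendsto (fun n => empPsi3 X n ω) atTop (𝓝 Ψ3) := by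
      refine tendsto_pi_nhds.mpr fun p => tendsto_pi_nhds.mpr fun s => ?_
      obtain ⟨a, r⟩ := p
      have : Ψ3 (a, r) s = (∫ ω, X 0 ω a * X 0 ω r * X 0 ω s ∂P)
          - (∫ ω, X 0 ω a * X 0 ω r ∂P) * (∫ ω, X 0 ω s ∂P) := hΨ3 a r s
      rw [show (fun n => empPsi3 X n ω (a, r) s)
          = fun n : ℕ => ((n : ℝ)⁻¹ * ∑ j ∈ Finset.range n, X j ω a * X j ω r * X j ω s)
            - ((n : ℝ)⁻¹ * ∑ j ∈ Finset.range n, X j ω a * X j ω r)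
              * ((n : ℝ)⁻¹ * ∑ j ∈ Finset.range n, X j ω s) from rfl, this]
      exact (h3 a r s).sub ((h2 a r).mul (h1 s))
    have hp4 : Tendsto (fun n => empPsi4 X n ω) atTop (𝓝 Ψ4) := by
      refine tendsto_pi_nhds.mpr fun p => tendsto_pi_nhds.mpr fun q => ?_
      obtain ⟨a, r⟩ := p
      obtain ⟨b, s⟩ := q
      have : Ψ4 (a, r) (b, s) = (∫ ω, X 0 ω a * X 0 ω r * X 0 ω b * X 0 ω s ∂P)
          - (∫ ω, X 0 ω a * X 0 ω r ∂P) * (∫ ω, X 0 ω b * X 0 ω s ∂P) := hΨ4 a r b s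
      rw [show (fun n => empPsi4 X n ω (a, r) (b, s))
          = fun n : ℕ =>
            ((n : ℝ)⁻¹ * ∑ j ∈ Finset.range n, X j ω a * X j ω r * X j ω b * X j ω s)
            - ((n : ℝ)⁻¹ * ∑ j ∈ Finset.range n, X j ω a * X j ω r)
              * ((n : ℝ)⁻¹ * ∑ j ∈ Finset.range n, X j ω b * X j ω s) from rfl, this]
      exact (h4 a r b s).sub ((h2 a r).mul (h2 b s))
    have hq : Tendsto (fun n => ((empMean X n ω, empCov X n ω, empPsi3 X n ω,
        empPsi4 X n ω) : Quad d)) atTop (𝓝 ((μ, SigM, Ψ3, Ψ4) : Quad d)) :=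
      hmean.prodMk_nhds (hcov.prodMk_nhds (hp3.prodMk_nhds hp4))
    exact hcontAt.tendsto.comp hq
  -- measurability of the plug-in estimator
  have hfmeas : ∀ n, AEStronglyMeasurable (f n) P := by
    intro n
    have hqmeas : Measurable fun ω => ((empMean X n ω, empCov X n ω, empPsi3 X n ω,
        empPsi4 X n ω) : Quad d) := by
      have hmean : Measurable fun ω => empMean X n ω :=
        measurable_pi_lambda _ fun a => measurable_const.mul
          (Finset.measurable_sum _ fun j _ => (measurable_pi_apply a).comp (hmeas j))
      have hmeanc : ∀ a, Measurable fun ω => empMean X n ω a := fun a =>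
        (measurable_pi_apply a).comp hmean
      have hcov : Measurable fun ω => empCov X n ω :=
        measurable_pi_lambda _ fun a => measurable_pi_lambda _ fun b =>
          measurable_const.mul (Finset.measurable_sum _ fun j _ =>
            (((measurable_pi_apply a).comp (hmeas j)).sub (hmeanc a)).mul
              (((measurable_pi_apply b).comp (hmeas j)).sub (hmeanc b)))
      have hp3 : Measurable fun ω => empPsi3 X n ω :=
        measurable_pi_lambda _ fun p => measurable_pi_lambda _ fun s =>
          (measurable_const.mul (Finset.measurable_sum _ fun j _ =>
            (((measurable_pi_apply p.1).comp (hmeas j)).mul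
              ((measurable_pi_apply p.2).comp (hmeas j))).mul
              ((measurable_pi_apply s).comp (hmeas j)))).sub
          ((measurable_const.mul (Finset.measurable_sum _ fun j _ =>
            ((measurable_pi_apply p.1).comp (hmeas j)).mul
              ((measurable_pi_apply p.2).comp (hmeas j)))).mul
           (measurable_const.mul (Finset.measurable_sum _ fun j _ =>
            ((measurable_pi_apply s).comp (hmeas j)))))
      have hp4 : Measurable fun ω => empPsi4 X n ω :=
        measurable_pi_lambda _ fun p => measurable_pi_lambda _ fun q =>
          (measurable_const.mul (Finset.measurable_sum _ fun j _ =>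
            ((((measurable_pi_apply p.1).comp (hmeas j)).mul
              ((measurable_pi_apply p.2).comp (hmeas j))).mul
              ((measurable_pi_apply q.1).comp (hmeas j))).mul
              ((measurable_pi_apply q.2).comp (hmeas j)))).sub
          ((measurable_const.mul (Finset.measurable_sum _ fun j _ =>
            ((measurable_pi_apply p.1).comp (hmeas j)).mul
              ((measurable_pi_apply p.2).comp (hmeas j)))).mul
           (measurable_const.mul (Finset.measurable_sum _ fun j _ =>
            ((measurable_pi_apply q.1).comp (hmeas j)).mul
              ((measurable_pi_apply q.2).comp (hmeas j)))))
      exact hmean.prodMk (hcov.prodMk (hp3.prodMk hp4))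
    exact ((measurable_sigma2VV d).comp hqmeas).aestronglyMeasurable
  -- convergence in measure
  have hTIM : TendstoInMeasure P f atTop (fun _ => c) :=
    tendstoInMeasure_of_tendsto_ae hfmeas hT
  have hmain := tendstoInMeasure_iff_dist.mp hTIM ε hε
  refine tendsto_of_tendsto_of_tendsto_of_le_of_le tendsto_const_nhds hmain
    (fun n => zero_le) (fun n => measure_mono ?_)
  intro ω hω
  simp only [Set.mem_setOf_eq] at hω ⊢
  rw [Real.dist_eq]
  exact le_of_lt hω

end
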